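/- Let A be a unital C*-algebra and μ a state on A. If a ∈ A is invertible, then σ^μ(a⁻¹) ≤ ‖a⁻¹‖² · σ^μ(a), where σ^μ(a) = max(‖a − μ(a)‖_μ, ‖a* − μ(a*)‖_μ). -/

import Mathlib

open scoped ComplexOrder

section Aux

variable {A : Type*} [CStarAlgebra A]

private lemma herm_aux (μ : A →ₗ[ℂ] ℂ) (hpos : ∀ a : A, 0 ≤ μ (star a * a)) (x y : A) :
    (starRingEnd ℂ) (μ (star y * x)) = μ (star x * y) := by
  have him : ∀ z : A, (μ (star z * z)).im = 0 := fun z =>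
    ((Complex.nonneg_iff.mp (hpos z)).2).symm
  have e1 : μ (star (x + y) * (x + y)) =
      μ (star x * x) + μ (star x * y) + μ (star y * x) + μ (star y * y) := by
    simp only [star_add, add_mul, mul_add, map_add]; ring
  have h2 : (μ (star x * y)).im + (μ (star y * x)).im = 0 := by
    have h := him (x + y)
    rw [e1] at h
    simp only [Complex.add_im, him x, him y] at h
    linarith
  have e2 : μ (star (x + Complex.I • y) * (x + Complex.I • y)) =
      μ (star x * x) + Complex.I * μ (star x * y) - Complex.I * μ (star y * x)
        + μ (star y * y) := by
    simp only [star_add, star_smul, add_mul, mul_add, map_add, map_smul, smul_mul_assoc,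
      mul_smul_comm, smul_smul, smul_eq_mul, Complex.star_def, Complex.conj_I]
    linear_combination (-(μ (star y * y))) * Complex.I_sq
  have h3 : (μ (star x * y)).re - (μ (star y * x)).re = 0 := by
    have h := him (x + Complex.I • y)
    rw [e2] at h
    simp only [Complex.add_im, Complex.sub_im, Complex.mul_im, Complex.I_re, Complex.I_im,
      him x, him y] at h
    linarith
  apply Complex.ext <;> simp [Complex.conj_re, Complex.conj_im] <;> linarith

private lemma mu_star_aux (μ : A →ₗ[ℂ] ℂ) (hpos : ∀ a : A, 0 ≤ μ (star a * a)) (x : A) :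
    μ (star x) = (starRingEnd ℂ) (μ x) := by
  have h := herm_aux μ hpos x 1
  simp only [star_one, one_mul, mul_one] at h
  exact h.symm

private noncomputable def coreOf (μ : A →ₗ[ℂ] ℂ) (hpos : ∀ a : A, 0 ≤ μ (star a * a)) :
    PreInnerProductSpace.Core ℂ A where
  inner x y := μ (star x * y)
  conj_inner_symm x y := herm_aux μ hpos x y
  re_inner_nonneg x := by
    simpa using (Complex.nonneg_iff.mp (hpos x)).1
  add_left x y z := by simp only [star_add, add_mul, map_add]
  smul_left x y r := by
    simp only [star_smul, smul_mul_assoc, map_smul, smul_eq_mul, Complex.star_def]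

private lemma cs_aux (μ : A →ₗ[ℂ] ℂ) (hpos : ∀ a : A, 0 ≤ μ (star a * a)) (x y : A) :
    ‖μ (star x * y)‖ ^ 2 ≤ (μ (star x * x)).re * (μ (star y * y)).re := by
  letI c := coreOf μ hpos
  have h := @InnerProductSpace.Core.inner_mul_inner_self_le ℂ A _ _ _ c x y
  have hsymm : ‖μ (star y * x)‖ = ‖μ (star x * y)‖ := by
    rw [← herm_aux μ hpos x y]; exact (RCLike.norm_conj _).symm
  calc ‖μ (star x * y)‖ ^ 2 = ‖μ (star x * y)‖ * ‖μ (star y * x)‖ := by rw [hsymm]; ring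
    _ ≤ (μ (star x * x)).re * (μ (star y * y)).re := h

private lemma exists_sq_aux (b : A) :
    ∃ y : A, star y * y = ((‖b‖^2 : ℝ) : ℂ) • (1:A) - star b * b := by
  letI := CStarAlgebra.spectralOrder A
  haveI := CStarAlgebra.spectralOrderedRing A
  have halg : algebraMap ℝ A (‖b‖^2) = ((‖b‖^2 : ℝ) : ℂ) • (1:A) := by
    rw [IsScalarTower.algebraMap_apply ℝ ℂ A, Algebra.algebraMap_eq_smul_one]
    norm_num
  have h0 : (0:A) ≤ algebraMap ℝ A (‖b‖^2) - star b * b :=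
    sub_nonneg.mpr CStarAlgebra.star_mul_le_algebraMap_norm_sq
  refine ⟨CFC.sqrt (algebraMap ℝ A (‖b‖^2) - star b * b), ?_⟩
  rw [(IsSelfAdjoint.of_nonneg (CFC.sqrt_nonneg _)).star_eq, CFC.sqrt_mul_sqrt_self _ h0, halg]

private lemma re_mu_le_norm_aux (μ : A →ₗ[ℂ] ℂ) (hpos : ∀ a : A, 0 ≤ μ (star a * a))
    (hone : μ 1 = 1) (x : A) : (μ (star x * x)).re ≤ ‖x‖ ^ 2 := by
  obtain ⟨y, hy⟩ := exists_sq_aux x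
  have h := hpos y
  rw [hy, map_sub, map_smul, hone, smul_eq_mul, mul_one] at h
  have := (Complex.nonneg_iff.mp h).1
  simp only [Complex.sub_re, Complex.ofReal_re] at this
  linarith

private lemma conj_bound_aux (μ : A →ₗ[ℂ] ℂ) (hpos : ∀ a : A, 0 ≤ μ (star a * a)) (b x : A) :
    (μ (star (b * x) * (b * x))).re ≤ ‖b‖ ^ 2 * (μ (star x * x)).re := by
  obtain ⟨y, hy⟩ := exists_sq_aux b
  have key : star (b * x) * (b * x) + star (y * x) * (y * x)
      = ((‖b‖^2 : ℝ) : ℂ) • (star x * x) := by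
    have h1 : star x * (star y * y) * x
        = ((‖b‖^2 : ℝ) : ℂ) • (star x * x) - star x * (star b * b) * x := by
      rw [hy]; simp only [mul_sub, sub_mul, mul_smul_comm, smul_mul_assoc, mul_one]
    calc star (b * x) * (b * x) + star (y * x) * (y * x)
        = star x * (star b * b) * x + star x * (star y * y) * x := by
          simp only [star_mul, mul_assoc]
      _ = ((‖b‖^2 : ℝ) : ℂ) • (star x * x) := by rw [h1, add_comm, sub_add_cancel]
  have h2 : μ (star (b * x) * (b * x)) + μ (star (y * x) * (y * x))
      = ((‖b‖^2 : ℝ) : ℂ) * μ (star x * x) := by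
    rw [← map_add, key, map_smul, smul_eq_mul]
  have h3 := (Complex.nonneg_iff.mp (hpos (y * x))).1
  have h4 : (μ (star (b * x) * (b * x))).re + (μ (star (y * x) * (y * x))).re
      = ‖b‖ ^ 2 * (μ (star x * x)).re := by
    have := congrArg Complex.re h2
    simpa only [Complex.add_re, Complex.re_ofReal_mul] using this
  linarith

private lemma component_aux (μ : A →ₗ[ℂ] ℂ) (hpos : ∀ a : A, 0 ≤ μ (star a * a))
    (hone : μ 1 = 1) (b a' : A) (hba : b * a' = 1) :
    Real.sqrt (μ (star (b - μ b • 1) * (b - μ b • 1))).re ≤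
      ‖b‖ ^ 2 * Real.sqrt (μ (star (a' - μ a' • 1) * (a' - μ a' • 1))).re := by
  set α := μ a' with hα
  set β := μ b with hβ
  set w : A := a' - α • 1 with hw
  set u : A := 1 - β • a' with huu
  set v : A := star b - (starRingEnd ℂ) β • 1 with hv
  set t : ℂ := 1 - β * α with htt
  have hμw : μ w = 0 := by
    simp [hw, map_sub, map_smul, hone, smul_eq_mul, ← hα]
  have hμsw : μ (star w) = 0 := by
    rw [mu_star_aux μ hpos, hμw, map_zero]
  have hsv : star v = b - β • 1 := by
    simp [hv, star_sub, star_smul, star_star, star_one, Complex.star_def, Complex.conj_conj]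
  -- (1) key identity
  have hid : b - β • 1 = b * u := by
    simp [huu, mul_sub, mul_smul_comm, hba]
  have step1 : (μ (star (b - β • 1) * (b - β • 1))).re ≤ ‖b‖ ^ 2 * (μ (star u * u)).re := by
    rw [hid]; exact conj_bound_aux μ hpos b u
  -- (5) expansion of u
  have hu : u = (-β) • w + t • 1 := by
    simp only [hw, huu, htt, smul_sub, sub_smul, smul_smul, one_smul, neg_smul]
    module
  have hexp : μ (star u * u) =
      (starRingEnd ℂ) β * β * μ (star w * w) + (starRingEnd ℂ) t * t := by
    rw [hu]
    simp only [star_add, star_smul, star_one, add_mul, mul_add, smul_mul_assoc, mul_smul_comm,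
      smul_smul, map_add, map_smul, smul_eq_mul, mul_one, one_mul, hμw, hμsw, hone,
      mul_zero, Complex.star_def, map_neg]
    ring
  have hre : (μ (star u * u)).re =
      Complex.normSq β * (μ (star w * w)).re + Complex.normSq t := by
    have c1 : (starRingEnd ℂ) β * β = (Complex.normSq β : ℂ) := by
      rw [mul_comm, Complex.mul_conj]
    have c2 : (starRingEnd ℂ) t * t = (Complex.normSq t : ℂ) := by
      rw [mul_comm, Complex.mul_conj]
    rw [hexp, c1, c2]
    simp [Complex.add_re, Complex.re_ofReal_mul]
  -- (6) t is a covariance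
  have ht : t = μ (star v * w) := by
    rw [hsv]
    simp only [hw, htt, sub_mul, mul_sub, smul_mul_assoc, mul_smul_comm, smul_smul,
      map_sub, map_smul, hba, hone, smul_eq_mul, mul_one, one_mul, ← hα, ← hβ]
    ring
  -- (7) Cauchy–Schwarz
  have hCS : Complex.normSq t ≤ (μ (star v * v)).re * (μ (star w * w)).re := by
    have h := cs_aux μ hpos v w
    rw [← ht] at h
    simpa [Complex.sq_norm] using h
  -- (9) Pythagoras for v
  have hμsb : μ (star b) = (starRingEnd ℂ) β := by rw [mu_star_aux μ hpos, hβ]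
  have hv9 : (μ (star v * v)).re = (μ (b * star b)).re - Complex.normSq β := by
    have : μ (star v * v) = μ (b * star b) - (starRingEnd ℂ) β * β := by
      rw [hsv]
      simp only [hv, sub_mul, mul_sub, smul_mul_assoc, mul_smul_comm, smul_smul,
        map_sub, map_smul, hμsb, hone, smul_eq_mul, mul_one, one_mul, ← hβ]
      ring
    rw [this]
    have c1 : (starRingEnd ℂ) β * β = (Complex.normSq β : ℂ) := by
      rw [mul_comm, Complex.mul_conj]
    rw [c1]
    simp
  have hbb : (μ (b * star b)).re ≤ ‖b‖ ^ 2 := by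
    have h := re_mu_le_norm_aux μ hpos hone (star b)
    simpa [star_star, norm_star] using h
  -- nonnegativity facts
  have hS : 0 ≤ (μ (star w * w)).re := (Complex.nonneg_iff.mp (hpos w)).1
  have hV : 0 ≤ (μ (star v * v)).re := (Complex.nonneg_iff.mp (hpos v)).1
  have hβn : 0 ≤ Complex.normSq β := Complex.normSq_nonneg β
  -- combine
  have hVS : (μ (star v * v)).re * (μ (star w * w)).re
      = (μ (b * star b)).re * (μ (star w * w)).re
        - Complex.normSq β * (μ (star w * w)).re := by
    rw [hv9]; ring
  have hMS := mul_le_mul_of_nonneg_right hbb hS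
  have q1 : (μ (star u * u)).re ≤ ‖b‖ ^ 2 * (μ (star w * w)).re := by linarith
  have main : (μ (star (b - β • 1) * (b - β • 1))).re ≤
      (‖b‖ ^ 2 * ‖b‖ ^ 2) * (μ (star w * w)).re := by
    have h5 := mul_le_mul_of_nonneg_left q1 (by positivity : (0:ℝ) ≤ ‖b‖ ^ 2)
    nlinarith [step1]
  calc Real.sqrt (μ (star (b - β • 1) * (b - β • 1))).re
      ≤ Real.sqrt ((‖b‖ ^ 2) ^ 2 * (μ (star w * w)).re) := by
        apply Real.sqrt_le_sqrt; nlinarith [main]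
    _ = ‖b‖ ^ 2 * Real.sqrt (μ (star w * w)).re := by
        rw [Real.sqrt_mul (by positivity) _, Real.sqrt_sq (by positivity)]

end Aux

/-- The standard deviation σ^μ(a) = max(‖a − μ(a)1‖_μ, ‖a* − conj(μ(a))1‖_μ) with
respect to a state μ on a unital C*-algebra, where ‖c‖_μ = μ(c*c)^{1/2}. -/
noncomputable def stdDev {A : Type*} [NormedRing A] [StarRing A] [CStarRing A]
    [NormedAlgebra ℂ A] [StarModule ℂ A] (μ : A →ₗ[ℂ] ℂ) (a : A) : ℝ :=
  max (Real.sqrt (μ (star (a - μ a • 1) * (a - μ a • 1))).re)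
    (Real.sqrt (μ (star (star a - (starRingEnd ℂ) (μ a) • 1) *
      (star a - (starRingEnd ℂ) (μ a) • 1))).re)

/-- For a state μ on a unital C*-algebra, the standard deviation σ^μ is strongly
Leibniz: for invertible a, σ^μ(a⁻¹) ≤ ‖a⁻¹‖² σ^μ(a). -/
theorem stdDev_stronglyLeibniz {A : Type*} [NormedRing A] [StarRing A]
    [CStarRing A] [NormedAlgebra ℂ A] [StarModule ℂ A] [CompleteSpace A]
    (μ : A →ₗ[ℂ] ℂ) (hpos : ∀ a : A, 0 ≤ μ (star a * a)) (hone : μ 1 = 1)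
    (a : Aˣ) :
    stdDev μ ((a⁻¹ : Aˣ) : A) ≤ ‖((a⁻¹ : Aˣ) : A)‖ ^ 2 * stdDev μ (a : A) := by
  letI : CStarAlgebra A :=
    { ‹NormedRing A›, ‹StarRing A›, ‹CStarRing A›, ‹NormedAlgebra ℂ A›,
      ‹StarModule ℂ A›, ‹CompleteSpace A› with }
  set b : A := ((a⁻¹ : Aˣ) : A) with hb
  have hba : b * (a : A) = 1 := a.inv_mul
  have hsba : star b * star (a : A) = 1 := by
    rw [← star_mul, a.mul_inv, star_one]
  have c1 := component_aux μ hpos hone b (a : A) hba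
  have c2 := component_aux μ hpos hone (star b) (star (a : A)) hsba
  rw [mu_star_aux μ hpos b, mu_star_aux μ hpos (a : A), norm_star] at c2
  have hN : (0:ℝ) ≤ ‖b‖ ^ 2 := by positivity
  unfold stdDev
  apply max_le
  · exact c1.trans (mul_le_mul_of_nonneg_left (le_max_left _ _) hN)
  · exact c2.trans (mul_le_mul_of_nonneg_left (le_max_right _ _) hN)
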